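/- arXiv:1907.04644 — 2 statements merged into one kernel-verified Lean document; each statement's English description precedes it below -/
import Mathlib

section
/- Let u ∈ ℝ^n with u > 0 entrywise and ‖u‖ = 1, set λ = λ(u) = min_i (𝒜(u)u)_i / u_i, and let (Δ, δ) solve the Newton system at (u,λ). Then δ · (u^T J(u,λ)^{-1} u) = u^T J(u,λ)^{-1} r(u,λ), and consequently δ ≥ 0. -/
open Matrix Finset

noncomputable def enorm' {n : ℕ} (u : Fin n → ℝ) : ℝ := Real.sqrt (∑ i, u i ^ 2)

def IsZMatrix {n : ℕ} (B : Matrix (Fin n) (Fin n) ℝ) : Prop :=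
  ∀ i j, i ≠ j → B i j ≤ 0

def IsIrreducibleMat {n : ℕ} (B : Matrix (Fin n) (Fin n) ℝ) : Prop :=
  ¬ ∃ S : Finset (Fin n), S.Nonempty ∧ S ≠ Finset.univ ∧
    ∀ i ∈ S, ∀ j ∉ S, B i j = 0

def IsNonsingularM {n : ℕ} (B : Matrix (Fin n) (Fin n) ℝ) : Prop :=
  IsZMatrix B ∧ IsUnit B ∧ ∀ i j, 0 ≤ B⁻¹ i j

noncomputable def calA {n : ℕ} (A : Matrix (Fin n) (Fin n) ℝ) (Γ : ℝ) (a : Fin n → ℝ)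
    (u : Fin n → ℝ) : Matrix (Fin n) (Fin n) ℝ :=
  A + Γ • Matrix.diagonal (fun i => 1 - 1 / (a i + u i ^ 2))

noncomputable def rvec {n : ℕ} (A : Matrix (Fin n) (Fin n) ℝ) (Γ : ℝ) (a : Fin n → ℝ)
    (u : Fin n → ℝ) (lam : ℝ) : Fin n → ℝ :=
  calA A Γ a u *ᵥ u - lam • u

noncomputable def Jmat {n : ℕ} (A : Matrix (Fin n) (Fin n) ℝ) (Γ : ℝ) (a : Fin n → ℝ)
    (u : Fin n → ℝ) (lam : ℝ) : Matrix (Fin n) (Fin n) ℝ :=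
  A + (Γ - lam) • (1 : Matrix (Fin n) (Fin n) ℝ)
    - Γ • Matrix.diagonal (fun i => (a i - u i ^ 2) / (a i + u i ^ 2) ^ 2)

noncomputable def lamOf {n : ℕ} [NeZero n] (A : Matrix (Fin n) (Fin n) ℝ) (Γ : ℝ)
    (a : Fin n → ℝ) (u : Fin n → ℝ) : ℝ :=
  ⨅ i, (calA A Γ a u *ᵥ u) i / u i

def NewtonSystem {n : ℕ} (A : Matrix (Fin n) (Fin n) ℝ) (Γ : ℝ) (a : Fin n → ℝ)
    (u : Fin n → ℝ) (lam : ℝ) (Δ : Fin n → ℝ) (δ : ℝ) : Prop :=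
  Jmat A Γ a u lam *ᵥ Δ - δ • u = -rvec A Γ a u lam ∧
  -(u ⬝ᵥ Δ) = -(1/2 * (u ⬝ᵥ u - 1))


/-- Maximum principle: if J is a Z-matrix, u > 0, J*u > 0 entrywise,
and J*x = b with b ≥ 0, then x ≥ 0. -/
lemma maxprin {n : ℕ} (J : Matrix (Fin n) (Fin n) ℝ) (u x b : Fin n → ℝ)
    (hu : ∀ i, 0 < u i) (hZ : ∀ i j, i ≠ j → J i j ≤ 0)
    (hJu : ∀ i, 0 < (J *ᵥ u) i) (hb : ∀ i, 0 ≤ b i)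
    (hx : J *ᵥ x = b) : ∀ i, 0 ≤ x i := by
  by_contra h
  push_neg at h
  obtain ⟨m, hm⟩ := h
  obtain ⟨k, -, hk⟩ := Finset.exists_min_image Finset.univ (fun i => x i / u i)
    ⟨m, mem_univ m⟩
  set t := x k / u k with ht
  have htneg : t < 0 :=
    lt_of_le_of_lt (hk m (mem_univ m)) (div_neg_of_neg_of_pos hm (hu m))
  have hy : ∀ j, 0 ≤ x j - t * u j := by
    intro j
    have h1 : t ≤ x j / u j := hk j (mem_univ j)
    have := (le_div_iff₀ (hu j)).mp h1
    linarith
  have hyk : x k - t * u k = 0 := by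
    have : t * u k = x k := div_mul_cancel₀ (x k) (hu k).ne'
    linarith
  have key : (J *ᵥ x) k - t * (J *ᵥ u) k ≤ 0 := by
    have expand : (J *ᵥ x) k - t * (J *ᵥ u) k
        = ∑ j, J k j * (x j - t * u j) := by
      simp only [Matrix.mulVec, dotProduct, Finset.mul_sum,
        ← Finset.sum_sub_distrib]
      congr 1; funext j; ring
    rw [expand]
    apply Finset.sum_nonpos
    intro j _
    by_cases hjk : j = k
    · subst hjk; rw [hyk]; simp
    · exact mul_nonpos_of_nonpos_of_nonneg (hZ k j (Ne.symm hjk)) (hy j)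
  rw [hx] at key
  nlinarith [hb k, hJu k, mul_pos (neg_pos.mpr htneg) (hJu k)]

lemma zmat_det_ne_zero {n : ℕ} (J : Matrix (Fin n) (Fin n) ℝ) (u : Fin n → ℝ)
    (hu : ∀ i, 0 < u i) (hZ : ∀ i j, i ≠ j → J i j ≤ 0)
    (hJu : ∀ i, 0 < (J *ᵥ u) i) : J.det ≠ 0 := by
  intro hdet
  obtain ⟨v, hv, hv0⟩ := (Matrix.exists_mulVec_eq_zero_iff).mpr hdet
  have h1 : ∀ i, 0 ≤ v i :=
    maxprin J u v 0 hu hZ hJu (fun i => le_refl 0) hv0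
  have h2 : ∀ i, 0 ≤ -v i := by
    apply maxprin J u (-v) 0 hu hZ hJu (fun i => le_refl 0)
    rw [Matrix.mulVec_neg, hv0, neg_zero]
  exact hv (funext fun i => by have := h1 i; have := h2 i; simp only [Pi.zero_apply]; linarith)

lemma zmat_inv_nonneg {n : ℕ} (J : Matrix (Fin n) (Fin n) ℝ) (u : Fin n → ℝ)
    (hu : ∀ i, 0 < u i) (hZ : ∀ i j, i ≠ j → J i j ≤ 0)
    (hJu : ∀ i, 0 < (J *ᵥ u) i) : ∀ i j, 0 ≤ J⁻¹ i j := by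
  have hdet := zmat_det_ne_zero J u hu hZ hJu
  intro i j
  have hx : J *ᵥ (J⁻¹ *ᵥ Pi.single j 1) = Pi.single j 1 := by
    rw [Matrix.mulVec_mulVec, Matrix.mul_nonsing_inv J (isUnit_iff_ne_zero.mpr hdet),
      Matrix.one_mulVec]
  have hsing : ∀ i : Fin n, 0 ≤ (Pi.single j (1:ℝ) : Fin n → ℝ) i := by
    intro i
    by_cases h : i = j
    · subst h; simp
    · simp [Pi.single_eq_of_ne h]
  have := maxprin J u (J⁻¹ *ᵥ Pi.single j 1) (Pi.single j 1) hu hZ hJu hsing hx i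
  simpa [Matrix.mulVec_single] using this

theorem stmt_7 {n : ℕ} [NeZero n] (A : Matrix (Fin n) (Fin n) ℝ) (a : Fin n → ℝ) (Γ : ℝ)
    (ha : ∀ i, 0 < a i) (hΓ : 0 < Γ)
    (hA : IsNonsingularM A) (hAirr : IsIrreducibleMat A)
    (u : Fin n → ℝ) (hu : ∀ i, 0 < u i) (hnorm : enorm' u = 1)
    (Δ : Fin n → ℝ) (δ : ℝ)
    (hN : NewtonSystem A Γ a u (lamOf A Γ a u) Δ δ) :
    δ * (u ⬝ᵥ ((Jmat A Γ a u (lamOf A Γ a u))⁻¹ *ᵥ u)) =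
      u ⬝ᵥ ((Jmat A Γ a u (lamOf A Γ a u))⁻¹ *ᵥ rvec A Γ a u (lamOf A Γ a u)) ∧
    0 ≤ δ := by
  set lam := lamOf A Γ a u with hlam
  set J := Jmat A Γ a u lam with hJdef
  set r := rvec A Γ a u lam with hrdef
  have hden : ∀ i, (0:ℝ) < a i + u i ^ 2 := fun i => add_pos_of_pos_of_nonneg (ha i) (sq_nonneg _)
  -- r ≥ 0 entrywise
  have hrnn : ∀ i, 0 ≤ r i := by
    intro i
    have hbdd : BddBelow (Set.range fun i => (calA A Γ a u *ᵥ u) i / u i) :=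
      (Set.finite_range _).bddBelow
    have hle : lam ≤ (calA A Γ a u *ᵥ u) i / u i := ciInf_le hbdd i
    have h2 := (le_div_iff₀ (hu i)).mp hle
    have : r i = (calA A Γ a u *ᵥ u) i - lam * u i := by
      simp [hrdef, rvec]
    linarith
  -- J is a Z-matrix
  have hZJ : ∀ i j, i ≠ j → J i j ≤ 0 := by
    intro i j h
    have : J i j = A i j := by
      simp [hJdef, Jmat, Matrix.add_apply, Matrix.sub_apply, Matrix.smul_apply,
        Matrix.one_apply_ne h, Matrix.diagonal_apply_ne _ h]
    rw [this]
    exact hA.1 i j h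
  -- rewrite J
  have hJeq : J = calA A Γ a u - lam • (1 : Matrix (Fin n) (Fin n) ℝ)
      + Γ • Matrix.diagonal (fun i => 2 * u i ^ 2 / (a i + u i ^ 2) ^ 2) := by
    ext i j
    by_cases h : i = j
    · subst h
      simp only [hJdef, Jmat, calA, Matrix.add_apply, Matrix.sub_apply, Matrix.smul_apply,
        Matrix.diagonal_apply_eq, Matrix.one_apply_eq, smul_eq_mul]
      have h0 : a i + u i ^ 2 ≠ 0 := (hden i).ne'
      field_simp
      ring
    · simp [hJdef, Jmat, calA, Matrix.add_apply, Matrix.sub_apply, Matrix.smul_apply,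
        Matrix.diagonal_apply_ne _ h, Matrix.one_apply_ne h]
  -- J *ᵥ u > 0 entrywise
  have hJu : ∀ i, 0 < (J *ᵥ u) i := by
    intro i
    have hcomp : (J *ᵥ u) i = r i + Γ * (2 * u i ^ 2 / (a i + u i ^ 2) ^ 2 * u i) := by
      rw [hJeq]
      simp only [Matrix.add_mulVec, Matrix.sub_mulVec, Matrix.smul_mulVec,
        Matrix.one_mulVec, Pi.add_apply, Pi.sub_apply, Pi.smul_apply, smul_eq_mul,
        Matrix.mulVec_diagonal, hrdef, rvec]
    have hpos : 0 < 2 * u i ^ 2 / (a i + u i ^ 2) ^ 2 * u i := by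
      have := hden i; have := hu i; positivity
    have := hrnn i
    rw [hcomp]
    nlinarith [mul_pos hΓ hpos]
  have hdet : J.det ≠ 0 := zmat_det_ne_zero J u hu hZJ hJu
  have hinv : ∀ i j, 0 ≤ J⁻¹ i j := zmat_inv_nonneg J u hu hZJ hJu
  have hdetU : IsUnit J.det := isUnit_iff_ne_zero.mpr hdet
  -- u ⬝ᵥ u = 1
  have huu : u ⬝ᵥ u = 1 := by
    have h1 : (0:ℝ) ≤ ∑ i, u i ^ 2 := Finset.sum_nonneg fun i _ => sq_nonneg _
    have hsq : Real.sqrt (∑ i, u i ^ 2) = 1 := hnorm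
    have hsum : ∑ i, u i ^ 2 = 1 := by
      have := Real.sq_sqrt h1
      rw [hsq] at this
      linarith [this]
    calc u ⬝ᵥ u = ∑ i, u i ^ 2 := by
            simp [dotProduct, sq]
      _ = 1 := hsum
  -- u ⬝ᵥ Δ = 0
  have hud : u ⬝ᵥ Δ = 0 := by
    have h2 := hN.2
    rw [huu] at h2
    simp at h2
    linarith
  -- Newton equation rearranged
  have h1eq : J *ᵥ Δ = -r + δ • u := by
    have h1 := hN.1
    have : J *ᵥ Δ - δ • u + δ • u = -r + δ • u := by rw [h1]
    simpa [sub_add_cancel] using this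
  have hΔ : Δ = J⁻¹ *ᵥ (J *ᵥ Δ) := by
    rw [Matrix.mulVec_mulVec, Matrix.nonsing_inv_mul J hdetU, Matrix.one_mulVec]
  have key : (0:ℝ) = -(u ⬝ᵥ (J⁻¹ *ᵥ r)) + δ * (u ⬝ᵥ (J⁻¹ *ᵥ u)) := by
    rw [← hud]
    conv_lhs => rw [hΔ, h1eq]
    rw [Matrix.mulVec_add, Matrix.mulVec_neg, Matrix.mulVec_smul,
      dotProduct_add, dotProduct_neg, dotProduct_smul,
      smul_eq_mul]
  -- nonnegativity of the two dot products
  have hvnn : ∀ i, 0 ≤ (J⁻¹ *ᵥ u) i := by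
    intro i
    simp only [Matrix.mulVec, dotProduct]
    exact Finset.sum_nonneg fun j _ => mul_nonneg (hinv i j) (hu j).le
  have hQ : 0 ≤ u ⬝ᵥ (J⁻¹ *ᵥ r) := by
    simp only [dotProduct, Matrix.mulVec]
    exact Finset.sum_nonneg fun i _ => mul_nonneg (hu i).le
      (Finset.sum_nonneg fun j _ => mul_nonneg (hinv i j) (hrnn j))
  have hv : J *ᵥ (J⁻¹ *ᵥ u) = u := by
    rw [Matrix.mulVec_mulVec, Matrix.mul_nonsing_inv J hdetU, Matrix.one_mulVec]
  have hvne : ∃ k, 0 < (J⁻¹ *ᵥ u) k := by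
    by_contra h
    push_neg at h
    have h0 : (J⁻¹ *ᵥ u) = 0 := funext fun i => le_antisymm (h i) (hvnn i)
    rw [h0, Matrix.mulVec_zero] at hv
    have i0 : Fin n := ⟨0, Nat.pos_of_ne_zero (NeZero.ne n)⟩
    have := congrFun hv i0
    simp at this
    exact (hu i0).ne' this.symm
  have hP : 0 < u ⬝ᵥ (J⁻¹ *ᵥ u) := by
    obtain ⟨k, hk⟩ := hvne
    rw [dotProduct]
    exact Finset.sum_pos' (fun i _ => mul_nonneg (hu i).le (hvnn i))
      ⟨k, mem_univ k, mul_pos (hu k) hk⟩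
  constructor
  · linarith [key]
  · by_contra hδ
    push_neg at hδ
    have : δ * (u ⬝ᵥ (J⁻¹ *ᵥ u)) < 0 := mul_neg_of_neg_of_pos hδ hP
    linarith [key, hQ]
end

section
/- Let u ∈ ℝ^n with u > 0 entrywise and ‖u‖ = 1, set λ = λ(u) = min_i (𝒜(u)u)_i / u_i, and let (Δ, δ) solve the Newton system at (u,λ). Then the following are equivalent: (i) δ = 0; (ii) r(u,λ) = 0; (iii) Δ = 0. -/
open Matrix Finset

noncomputable def enorm {n : ℕ} (u : Fin n → ℝ) : ℝ := Real.sqrt (∑ i, u i ^ 2)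

/-- Monotonicity of Z-matrices admitting a positive vector with positive image:
if `J` has nonpositive off-diagonal entries, `u > 0`, `J u > 0`, and `J x ≤ 0`,
then `x ≤ 0`. -/
lemma zmat_mono {n : ℕ} (J : Matrix (Fin n) (Fin n) ℝ) (u x : Fin n → ℝ)
    (hZ : ∀ i j, i ≠ j → J i j ≤ 0) (hu : ∀ i, 0 < u i)
    (hJu : ∀ i, 0 < (J *ᵥ u) i) (hx : ∀ i, (J *ᵥ x) i ≤ 0) :
    ∀ i, x i ≤ 0 := by
  by_contra hcon
  push_neg at hcon
  obtain ⟨i, hi⟩ := hcon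
  obtain ⟨i0, -, hi0⟩ := Finset.exists_max_image Finset.univ (fun j => x j / u j)
    ⟨i, Finset.mem_univ i⟩
  set t := x i0 / u i0 with ht
  have htpos : 0 < t := lt_of_lt_of_le (div_pos hi (hu i)) (hi0 i (Finset.mem_univ i))
  set y : Fin n → ℝ := fun j => t * u j - x j with hy
  have hynn : ∀ j, 0 ≤ y j := by
    intro j
    have := hi0 j (Finset.mem_univ j)
    have := (div_le_iff₀ (hu j)).mp this
    simp only [hy]
    linarith
  have hyi0 : y i0 = 0 := by
    have h : t * u i0 = x i0 := div_mul_cancel₀ _ (hu i0).ne'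
    simp [hy, h]
  have h1 : 0 < (J *ᵥ y) i0 := by
    have : (J *ᵥ y) i0 = t * (J *ᵥ u) i0 - (J *ᵥ x) i0 := by
      simp only [mulVec, dotProduct, hy]
      rw [Finset.mul_sum, ← Finset.sum_sub_distrib]
      exact Finset.sum_congr rfl fun j _ => by ring
    rw [this]
    have := hJu i0
    have := hx i0
    nlinarith
  have h2 : (J *ᵥ y) i0 ≤ 0 := by
    have : (J *ᵥ y) i0 = ∑ j, J i0 j * y j := rfl
    rw [this]
    apply Finset.sum_nonpos
    intro j _
    rcases eq_or_ne j i0 with rfl | hne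
    · rw [hyi0]; ring_nf; exact le_refl 0
    · exact mul_nonpos_of_nonpos_of_nonneg (hZ i0 j (Ne.symm hne)) (hynn j)
  linarith

/-- If `u > 0`, `Δ ≤ 0` entrywise and `∑ u i * Δ i = 0` then `Δ = 0`. -/
lemma delta_zero {n : ℕ} (u Δ : Fin n → ℝ) (hu : ∀ i, 0 < u i)
    (hΔ : ∀ i, Δ i ≤ 0) (hdot : ∑ i, u i * Δ i = 0) : ∀ i, Δ i = 0 := by
  have h := (Finset.sum_eq_zero_iff_of_nonpos
    (fun i _ => mul_nonpos_of_nonneg_of_nonpos (hu i).le (hΔ i))).mp hdot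
  intro i
  have := h i (Finset.mem_univ i)
  have hune := (hu i).ne'
  exact (mul_eq_zero.mp this).resolve_left hune

theorem stmt_8 {n : ℕ} [NeZero n] (A : Matrix (Fin n) (Fin n) ℝ) (a : Fin n → ℝ) (Γ : ℝ)
    (ha : ∀ i, 0 < a i) (hΓ : 0 < Γ)
    (hA : IsNonsingularM A) (hAirr : IsIrreducibleMat A)
    (u : Fin n → ℝ) (hu : ∀ i, 0 < u i) (hnorm : _root_.enorm u = 1)
    (Δ : Fin n → ℝ) (δ : ℝ)
    (hN : NewtonSystem A Γ a u (lamOf A Γ a u) Δ δ) :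
    (δ = 0 ↔ rvec A Γ a u (lamOf A Γ a u) = 0) ∧
    (rvec A Γ a u (lamOf A Γ a u) = 0 ↔ Δ = 0) := by
  set lam := lamOf A Γ a u with hlam
  set J := Jmat A Γ a u lam with hJ
  set r := rvec A Γ a u lam with hr
  have hau : ∀ i, 0 < a i + u i ^ 2 := fun i => add_pos_of_pos_of_nonneg (ha i) (sq_nonneg _)
  -- pointwise formula for r
  have hrdef : ∀ i, r i = (calA A Γ a u *ᵥ u) i - lam * u i := by
    intro i; simp [hr, rvec]
  -- lam is a lower bound of the quotients
  have hbdd : BddBelow (Set.range fun i => (calA A Γ a u *ᵥ u) i / u i) :=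
    Finite.bddBelow_range _
  have hrnn : ∀ i, 0 ≤ r i := by
    intro i
    have hle : lam ≤ (calA A Γ a u *ᵥ u) i / u i := ciInf_le hbdd i
    rw [hrdef i]
    have := (le_div_iff₀ (hu i)).mp hle
    linarith
  -- min attained
  obtain ⟨m, hm⟩ := Finite.exists_min (fun i => (calA A Γ a u *ᵥ u) i / u i)
  have hlamm : lam = (calA A Γ a u *ᵥ u) m / u m :=
    le_antisymm (ciInf_le hbdd m) (le_ciInf hm)
  have hrm : r m = 0 := by
    rw [hrdef m, hlamm, div_mul_cancel₀ _ (hu m).ne']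
    ring
  -- norm condition: u ⬝ᵥ u = 1
  have huu : u ⬝ᵥ u = 1 := by
    have h1 : ∑ i, u i ^ 2 = 1 := by
      have : Real.sqrt (∑ i, u i ^ 2) = 1 := hnorm
      have hnn : (0:ℝ) ≤ ∑ i, u i ^ 2 := Finset.sum_nonneg fun i _ => sq_nonneg _
      nlinarith [Real.sq_sqrt hnn, this]
    simp only [dotProduct]
    rw [← h1]; congr 1; ext i; ring
  -- Newton equations
  have hN1 : ∀ i, (J *ᵥ Δ) i - δ * u i = -(r i) := by
    intro i
    have := congrFun hN.1 i
    simpa using this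
  have hN2 : ∑ i, u i * Δ i = 0 := by
    have := hN.2
    rw [huu] at this
    simp only [dotProduct] at this ⊢
    linarith [neg_injective this]
  -- J is a Z-matrix
  have hZ : ∀ i j, i ≠ j → J i j ≤ 0 := by
    intro i j hij
    simp only [hJ, Jmat, Matrix.sub_apply, Matrix.add_apply, Matrix.smul_apply,
      Matrix.one_apply_ne hij, Matrix.diagonal_apply_ne _ hij, smul_eq_mul, mul_zero]
    simpa using hA.1 i j hij
  -- J u = r + positive diagonal term
  have hJu : ∀ i, 0 < (J *ᵥ u) i := by
    intro i
    have hDpos : 0 < 2 * Γ * u i ^ 3 / (a i + u i ^ 2) ^ 2 :=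
      div_pos (mul_pos (mul_pos two_pos hΓ) (pow_pos (hu i) 3)) (pow_pos (hau i) 2)
    have hkey : (J *ᵥ u) i = r i + 2 * Γ * u i ^ 3 / (a i + u i ^ 2) ^ 2 := by
      rw [hrdef i]
      simp only [hJ, Jmat, calA, Matrix.sub_mulVec, Matrix.add_mulVec,
        Matrix.smul_mulVec, Matrix.one_mulVec, Matrix.mulVec_diagonal,
        Pi.add_apply, Pi.sub_apply, Pi.smul_apply, smul_eq_mul]
      have h := (hau i).ne'
      field_simp
      ring
    rw [hkey]
    linarith [hrnn i]
  -- main implications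
  have himp1 : δ = 0 → (∀ i, Δ i = 0) ∧ (∀ i, r i = 0) := by
    intro hδ
    have hx : ∀ i, (J *ᵥ Δ) i ≤ 0 := by
      intro i
      have := hN1 i
      rw [hδ] at this
      have := hrnn i
      linarith
    have hΔle := zmat_mono J u Δ hZ hu hJu hx
    have hΔ0 := delta_zero u Δ hu hΔle hN2
    refine ⟨hΔ0, fun i => ?_⟩
    have h := hN1 i
    have hJΔ : (J *ᵥ Δ) i = 0 := by
      simp only [mulVec, dotProduct]
      apply Finset.sum_eq_zero
      intro j _
      rw [hΔ0 j, mul_zero]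
    rw [hJΔ, hδ] at h
    linarith
  have himp2 : (∀ i, r i = 0) → δ = 0 ∧ ∀ i, Δ i = 0 := by
    intro hr0
    have heq : ∀ i, (J *ᵥ Δ) i = δ * u i := by
      intro i
      have := hN1 i
      rw [hr0 i] at this
      linarith
    have hΔ0 : ∀ i, Δ i = 0 := by
      rcases le_or_gt δ 0 with hδ | hδ
      · apply delta_zero u Δ hu _ hN2
        apply zmat_mono J u Δ hZ hu hJu
        intro i
        rw [heq i]
        exact mul_nonpos_of_nonpos_of_nonneg hδ (hu i).le
      · have hneg : ∀ i, (J *ᵥ (-Δ)) i ≤ 0 := by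
          intro i
          rw [Matrix.mulVec_neg, Pi.neg_apply, heq i]
          have := mul_nonneg hδ.le (hu i).le
          linarith
        have h1 := zmat_mono J u (-Δ) hZ hu hJu hneg
        have h2 : ∀ i, (-Δ) i = 0 := by
          apply delta_zero u (-Δ) hu h1
          simp only [Pi.neg_apply, mul_neg]
          rw [Finset.sum_neg_distrib, hN2, neg_zero]
        intro i
        have := h2 i
        simp only [Pi.neg_apply, neg_eq_zero] at this
        exact this
    constructor
    · have := heq m
      have hJΔ : (J *ᵥ Δ) m = 0 := by
        simp only [mulVec, dotProduct]
        exact Finset.sum_eq_zero fun j _ => by rw [hΔ0 j, mul_zero]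
      rw [hJΔ] at this
      rcases mul_eq_zero.mp this.symm with h | h
      · exact h
      · exact absurd h (hu m).ne'
    · exact hΔ0
  have himp3 : (∀ i, Δ i = 0) → δ = 0 ∧ ∀ i, r i = 0 := by
    intro hΔ0
    have hJΔ : ∀ i, (J *ᵥ Δ) i = 0 := by
      intro i
      simp only [mulVec, dotProduct]
      exact Finset.sum_eq_zero fun j _ => by rw [hΔ0 j, mul_zero]
    have hri : ∀ i, r i = δ * u i := by
      intro i
      have := hN1 i
      rw [hJΔ i] at this
      linarith
    have hδ0 : δ = 0 := by
      have := hri m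
      rw [hrm] at this
      rcases mul_eq_zero.mp this.symm with h | h
      · exact h
      · exact absurd h (hu m).ne'
    exact ⟨hδ0, fun i => by rw [hri i, hδ0, zero_mul]⟩
  have hfun : ∀ v : Fin n → ℝ, v = 0 ↔ ∀ i, v i = 0 := by
    intro v
    constructor
    · intro h i; rw [h]; rfl
    · intro h; funext i; exact h i
  constructor
  · constructor
    · intro hδ
      rw [hfun]
      exact (himp1 hδ).2
    · intro hr0
      exact (himp2 ((hfun r).mp hr0)).1
  · constructor
    · intro hr0
      rw [hfun]
      exact (himp2 ((hfun r).mp hr0)).2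
    · intro hΔ0
      rw [hfun]
      exact (himp3 ((hfun Δ).mp hΔ0)).2
end
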